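/- arXiv:1111.0390 — 2 statements merged into one kernel-verified Lean document; each statement's English description precedes it below -/
import Mathlib

section
/- Let Ω ⊆ ℂ∖{0} be open, let f be a smooth complex-valued function on Ω, let β ∈ ℝ, and set g(z) = |z|^{2β} f(z). Then for every k ≥ 1, det_k(g) = |z|^{2kβ} det_k(f) at every point of Ω at which det_j(f) ≠ 0 for all 1 ≤ j ≤ k−1. -/
open Complex Finset MeasureTheory

noncomputable section

/-- Wirtinger derivative `∂_z = (∂_x - i ∂_y)/2` of a function `f : ℂ → ℂ`,
identifying `ℝ²` with `ℂ`. -/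
def wdz (f : ℂ → ℂ) (z : ℂ) : ℂ :=
  (fderiv ℝ f z 1 - Complex.I * fderiv ℝ f z Complex.I) / 2

/-- Wirtinger derivative `∂_z̄ = (∂_x + i ∂_y)/2`. -/
def wdzbar (f : ℂ → ℂ) (z : ℂ) : ℂ :=
  (fderiv ℝ f z 1 + Complex.I * fderiv ℝ f z Complex.I) / 2

/-- Laplacian `Δ = ∂_xx + ∂_yy` of a real-valued function on `ℂ ≃ ℝ²`. -/
def lap (u : ℂ → ℝ) (z : ℂ) : ℝ :=
  fderiv ℝ (fun w => fderiv ℝ u w 1) z 1 +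
    fderiv ℝ (fun w => fderiv ℝ u w Complex.I) z Complex.I

/-- Cartan matrix of SU(n+1) (entries indexed by `1 ≤ i, j ≤ n`):
`a_{ii} = 2`, `a_{ij} = -1` if `|i - j| = 1`, `a_{ij} = 0` otherwise. -/
def cartan (i j : ℕ) : ℝ :=
  if i = j then 2 else if i + 1 = j ∨ j + 1 = i then -1 else 0

/-- Entries of the inverse Cartan matrix: `a^{ij} = min(i,j)·(n+1−max(i,j))/(n+1)`. -/
def cartanInv (n i j : ℕ) : ℝ :=
  (min i j : ℝ) * ((n : ℝ) + 1 - (max i j : ℝ)) / ((n : ℝ) + 1)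

/-- `U_i = Σ_{j=1}^n a^{ij} u_j` with the convention `U_i = 0` for `i ∉ {1,…,n}`. -/
def Ufun (n : ℕ) (u : ℕ → ℂ → ℝ) (i : ℕ) (z : ℂ) : ℝ :=
  if 1 ≤ i ∧ i ≤ n then ∑ j ∈ Finset.Icc 1 n, cartanInv n i j * u j z else 0

/-- `U_i` viewed as a complex-valued function. -/
def UfunC (n : ℕ) (u : ℕ → ℂ → ℝ) (i : ℕ) : ℂ → ℂ := fun z => (Ufun n u i z : ℂ)

/-- `α_i = Σ_{j=1}^n a^{ij} γ_j`. -/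
def alph (n : ℕ) (γ : ℕ → ℝ) (i : ℕ) : ℝ :=
  ∑ j ∈ Finset.Icc 1 n, cartanInv n i j * γ j

/-- The invariants `W_k^j`:  `W_0^j = 0`, `W_1^j = −e^{U_1} ∂_z^{j+1}(e^{−U_1})`,
`W_{k+1}^j = −(∂_z̄ W_k^j)/(∂_z ∂_z̄ U_k)`. -/
def Wk (n : ℕ) (u : ℕ → ℂ → ℝ) : ℕ → ℕ → ℂ → ℂ
  | 0, _ => fun _ => 0
  | 1, j => fun z =>
      -Complex.exp ((Ufun n u 1 z : ℝ) : ℂ) *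
        wdz^[j + 1] (fun w => Complex.exp (-((Ufun n u 1 w : ℝ) : ℂ))) z
  | (k + 2), j => fun z =>
      -(wdzbar (Wk n u (k + 1) j) z) / wdz (wdzbar (UfunC n u (k + 1))) z

/-- A solution of the `SU(n+1)` Toda system without sources: smooth functions
`u_1, …, u_n : ℝ² → ℝ` with `Δu_i + Σ_j a_{ij} e^{u_j} = 0` on `ℝ²` and
`∫_{ℝ²} e^{u_i} < ∞`. -/
def IsTodaSolution (n : ℕ) (u : ℕ → ℂ → ℝ) : Prop :=
  ∀ i ∈ Finset.Icc 1 n,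
    ContDiff ℝ (⊤ : ℕ∞) (u i) ∧
    (∀ z : ℂ, lap (u i) z + ∑ j ∈ Finset.Icc 1 n, cartan i j * Real.exp (u j z) = 0) ∧
    MeasureTheory.Integrable (fun z : ℂ => Real.exp (u i z))

/-- A solution of the `SU(n+1)` Toda system with singular source `4πγ_iδ_0`:
smooth on `ℂ∖{0}`, `Δu_i + Σ_j a_{ij} e^{u_j} = 0` off the origin,
`u_i(z) − 2γ_i log|z|` bounded near `0`, and `∫ e^{u_i} < ∞`. -/
def IsSingularTodaSolution (n : ℕ) (γ : ℕ → ℝ) (u : ℕ → ℂ → ℝ) : Prop :=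
  ∀ i ∈ Finset.Icc 1 n,
    ContDiffOn ℝ (⊤ : ℕ∞) (u i) {(0 : ℂ)}ᶜ ∧
    (∀ z : ℂ, z ≠ 0 →
      lap (u i) z + ∑ j ∈ Finset.Icc 1 n, cartan i j * Real.exp (u j z) = 0) ∧
    (∃ ε > (0:ℝ), ∃ C : ℝ, ∀ z : ℂ, z ≠ 0 → ‖z‖ < ε →
      |u i z - 2 * γ i * Real.log (‖z‖)| ≤ C) ∧
    MeasureTheory.Integrable (fun z : ℂ => Real.exp (u i z))

/-- `det_k(f)`: the determinant of the `k×k` matrix `(∂_z^p ∂_z̄^q f)_{0 ≤ p,q ≤ k−1}`,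
with `det_0(f) = 1`. -/
def detk (k : ℕ) (f : ℂ → ℂ) (z : ℂ) : ℂ :=
  Matrix.det (Matrix.of fun p q : Fin k => wdz^[(p : ℕ)] (wdzbar^[(q : ℕ)] f) z)











lemma wdz_mul {f g : ℂ → ℂ} {z : ℂ} (hf : DifferentiableAt ℝ f z)
    (hg : DifferentiableAt ℝ g z) :
    wdz (fun w => f w * g w) z = wdz f z * g z + f z * wdz g z := by
  unfold wdz
  rw [fderiv_fun_mul hf hg]
  simp only [ContinuousLinearMap.add_apply, ContinuousLinearMap.smul_apply, smul_eq_mul]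
  ring

lemma wdzbar_mul {f g : ℂ → ℂ} {z : ℂ} (hf : DifferentiableAt ℝ f z)
    (hg : DifferentiableAt ℝ g z) :
    wdzbar (fun w => f w * g w) z = wdzbar f z * g z + f z * wdzbar g z := by
  unfold wdzbar
  rw [fderiv_fun_mul hf hg]
  simp only [ContinuousLinearMap.add_apply, ContinuousLinearMap.smul_apply, smul_eq_mul]
  ring

lemma wdz_const_mul (c : ℂ) {f : ℂ → ℂ} {z : ℂ} (hf : DifferentiableAt ℝ f z) :
    wdz (fun w => c * f w) z = c * wdz f z := by
  unfold wdz
  rw [fderiv_const_mul hf]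
  simp only [ContinuousLinearMap.smul_apply, smul_eq_mul]
  ring

lemma wdzbar_const_mul (c : ℂ) {f : ℂ → ℂ} {z : ℂ} (hf : DifferentiableAt ℝ f z) :
    wdzbar (fun w => c * f w) z = c * wdzbar f z := by
  unfold wdzbar
  rw [fderiv_const_mul hf]
  simp only [ContinuousLinearMap.smul_apply, smul_eq_mul]
  ring

lemma wdz_sum {ι : Type*} (s : Finset ι) {F : ι → ℂ → ℂ} {z : ℂ}
    (hF : ∀ i ∈ s, DifferentiableAt ℝ (F i) z) :
    wdz (fun w => ∑ i ∈ s, F i w) z = ∑ i ∈ s, wdz (F i) z := by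
  unfold wdz
  rw [fderiv_fun_sum hF]
  simp only [ContinuousLinearMap.sum_apply]
  rw [Finset.mul_sum, ← Finset.sum_sub_distrib, Finset.sum_div]

lemma wdz_congr {f g : ℂ → ℂ} {U : Set ℂ} (hU : IsOpen U) (h : Set.EqOn f g U)
    {z : ℂ} (hz : z ∈ U) : wdz f z = wdz g z := by
  unfold wdz
  rw [Filter.EventuallyEq.fderiv_eq (h.eventuallyEq_of_mem (hU.mem_nhds hz))]

lemma wdzbar_congr {f g : ℂ → ℂ} {U : Set ℂ} (hU : IsOpen U) (h : Set.EqOn f g U)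
    {z : ℂ} (hz : z ∈ U) : wdzbar f z = wdzbar g z := by
  unfold wdzbar
  rw [Filter.EventuallyEq.fderiv_eq (h.eventuallyEq_of_mem (hU.mem_nhds hz))]

lemma wdz_of_holo {f : ℂ → ℂ} {z : ℂ} (hf : DifferentiableAt ℂ f z) :
    wdz f z = deriv f z := by
  unfold wdz
  have h := (hf.hasFDerivAt.restrictScalars ℝ).fderiv
  rw [h]
  simp only [ContinuousLinearMap.coe_restrictScalars']
  have hI : fderiv ℂ f z Complex.I = Complex.I * fderiv ℂ f z 1 := by
    rw [show (Complex.I : ℂ) = Complex.I • (1:ℂ) by simp, _root_.map_smul]; simp [smul_eq_mul]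
  rw [hI, fderiv_apply_one_eq_deriv]
  ring_nf
  simp [Complex.I_sq]
  ring

lemma wdzbar_of_holo {f : ℂ → ℂ} {z : ℂ} (hf : DifferentiableAt ℂ f z) :
    wdzbar f z = 0 := by
  unfold wdzbar
  have h := (hf.hasFDerivAt.restrictScalars ℝ).fderiv
  rw [h]
  simp only [ContinuousLinearMap.coe_restrictScalars']
  have hI : fderiv ℂ f z Complex.I = Complex.I * fderiv ℂ f z 1 := by
    rw [show (Complex.I : ℂ) = Complex.I • (1:ℂ) by simp, _root_.map_smul]; simp [smul_eq_mul]
  rw [hI]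
  ring_nf
  simp [Complex.I_sq]









lemma fderiv_comp_conj {f : ℂ → ℂ} {z : ℂ} (hf : DifferentiableAt ℝ f ((starRingEnd ℂ) z)) :
    fderiv ℝ (fun w => f ((starRingEnd ℂ) w)) z
      = (fderiv ℝ f ((starRingEnd ℂ) z)).comp (Complex.conjCLE : ℂ →L[ℝ] ℂ) := by
  have h1 : HasFDerivAt (fun w : ℂ => (Complex.conjCLE w : ℂ))
      (Complex.conjCLE : ℂ →L[ℝ] ℂ) z := Complex.conjCLE.toContinuousLinearMap.hasFDerivAt
  have h2 : HasFDerivAt f (fderiv ℝ f ((starRingEnd ℂ) z)) ((starRingEnd ℂ) z) :=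
    hf.hasFDerivAt
  have := (h2.comp z (by simpa using h1))
  simpa [Function.comp_def] using this.fderiv

lemma wdz_comp_conj {f : ℂ → ℂ} {z : ℂ} (hf : DifferentiableAt ℝ f ((starRingEnd ℂ) z)) :
    wdz (fun w => f ((starRingEnd ℂ) w)) z = wdzbar f ((starRingEnd ℂ) z) := by
  unfold wdz wdzbar
  rw [fderiv_comp_conj hf]
  have e : ∀ v : ℂ, ((fderiv ℝ f ((starRingEnd ℂ) z)).comp (Complex.conjCLE : ℂ →L[ℝ] ℂ)) v
      = fderiv ℝ f ((starRingEnd ℂ) z) ((starRingEnd ℂ) v) := fun v => by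
    simp [Complex.conjCLE_apply]
  rw [e 1, e Complex.I, map_one, Complex.conj_I, map_neg]
  ring

lemma wdzbar_comp_conj {f : ℂ → ℂ} {z : ℂ} (hf : DifferentiableAt ℝ f ((starRingEnd ℂ) z)) :
    wdzbar (fun w => f ((starRingEnd ℂ) w)) z = wdz f ((starRingEnd ℂ) z) := by
  unfold wdz wdzbar
  rw [fderiv_comp_conj hf]
  have e : ∀ v : ℂ, ((fderiv ℝ f ((starRingEnd ℂ) z)).comp (Complex.conjCLE : ℂ →L[ℝ] ℂ)) v
      = fderiv ℝ f ((starRingEnd ℂ) z) ((starRingEnd ℂ) v) := fun v => by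
    simp [Complex.conjCLE_apply]
  rw [e 1, e Complex.I, map_one, Complex.conj_I, map_neg]
  ring

lemma diffAt_conj_comp {f : ℂ → ℂ} {z : ℂ} (hf : DifferentiableAt ℝ f ((starRingEnd ℂ) z)) :
    DifferentiableAt ℝ (fun w => f ((starRingEnd ℂ) w)) z := by
  have h1 : DifferentiableAt ℝ (fun w : ℂ => (starRingEnd ℂ) w) z := by
    exact (Complex.conjCLE.toContinuousLinearMap.differentiableAt (x := z))
  exact hf.comp z h1








def Hc (β : ℝ) : ℂ → ℂ := fun w => ((Complex.normSq w ^ β : ℝ) : ℂ)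

lemma hasFDerivAt_normSq (z : ℂ) :
    HasFDerivAt (fun w : ℂ => Complex.normSq w)
      ((2*z.re) • Complex.reCLM + (2*z.im) • Complex.imCLM) z := by
  have h1 := (Complex.reCLM.hasFDerivAt (x := z)).mul (Complex.reCLM.hasFDerivAt (x := z))
  have h2 := (Complex.imCLM.hasFDerivAt (x := z)).mul (Complex.imCLM.hasFDerivAt (x := z))
  have h3 := h1.add h2
  have hfun : (fun w : ℂ => Complex.normSq w)
      = fun w => Complex.reCLM w * Complex.reCLM w + Complex.imCLM w * Complex.imCLM w := by
    funext w; simp [Complex.normSq_apply]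
  rw [hfun]
  refine h3.congr_fderiv ?_
  ext v
  simp
  ring

lemma hasFDerivAt_Hc (β : ℝ) {z : ℂ} (hz : z ≠ 0) :
    HasFDerivAt (Hc β)
      (Complex.ofRealCLM.comp ((β * Complex.normSq z ^ (β - 1)) •
        ((2*z.re) • Complex.reCLM + (2*z.im) • Complex.imCLM))) z := by
  have hN := hasFDerivAt_normSq z
  have hp : HasDerivAt (fun t : ℝ => t ^ β) (β * (Complex.normSq z) ^ (β - 1))
      (Complex.normSq z) :=
    Real.hasDerivAt_rpow_const (Or.inl (ne_of_gt (Complex.normSq_pos.2 hz)))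
  have hc := hp.comp_hasFDerivAt z hN
  have := Complex.ofRealCLM.hasFDerivAt.comp z hc
  exact this

lemma diffAt_Hc (β : ℝ) {z : ℂ} (hz : z ≠ 0) : DifferentiableAt ℝ (Hc β) z :=
  (hasFDerivAt_Hc β hz).differentiableAt

lemma wdz_Hc (β : ℝ) {z : ℂ} (hz : z ≠ 0) :
    wdz (Hc β) z = (β : ℂ) * Hc β z * z⁻¹ := by
  unfold wdz
  rw [(hasFDerivAt_Hc β hz).fderiv]
  have hN : Complex.normSq z ≠ 0 := ne_of_gt (Complex.normSq_pos.2 hz)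
  simp only [ContinuousLinearMap.comp_apply, ContinuousLinearMap.add_apply,
    ContinuousLinearMap.smul_apply, Complex.reCLM_apply, Complex.imCLM_apply,
    Complex.ofRealCLM_apply, smul_eq_mul, Complex.one_re, Complex.one_im, Complex.I_re,
    Complex.I_im]
  rw [Complex.inv_def, Real.rpow_sub_one hN]
  unfold Hc
  rw [Complex.ext_iff]
  push_cast
  have h2 : z.re ^ 2 + z.im ^ 2 ≠ 0 := by
    simpa [Complex.normSq_apply, sq] using hN
  constructor <;>
  · simp [Complex.normSq_apply, Complex.div_re, Complex.div_im]
    ring_nf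
    rw [show z.re ^ 2 * z.im ^ 2 * 2 + z.re ^ 4 + z.im ^ 4 = (z.re ^ 2 + z.im ^ 2) ^ 2 by ring]
    field_simp [h2]
    ring

lemma wdzbar_Hc (β : ℝ) {z : ℂ} (hz : z ≠ 0) :
    wdzbar (Hc β) z = (β : ℂ) * Hc β z * ((starRingEnd ℂ) z)⁻¹ := by
  unfold wdzbar
  rw [(hasFDerivAt_Hc β hz).fderiv]
  have hN : Complex.normSq z ≠ 0 := ne_of_gt (Complex.normSq_pos.2 hz)
  simp only [ContinuousLinearMap.comp_apply, ContinuousLinearMap.add_apply,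
    ContinuousLinearMap.smul_apply, Complex.reCLM_apply, Complex.imCLM_apply,
    Complex.ofRealCLM_apply, smul_eq_mul, Complex.one_re, Complex.one_im, Complex.I_re,
    Complex.I_im]
  rw [show ((starRingEnd ℂ) z)⁻¹ = z * ((Complex.normSq z : ℝ) : ℂ)⁻¹ by
    rw [← map_inv₀, Complex.inv_def, map_mul]
    simp]
  rw [Real.rpow_sub_one hN]
  unfold Hc
  rw [Complex.ext_iff]
  push_cast
  have h2 : z.re ^ 2 + z.im ^ 2 ≠ 0 := by
    simpa [Complex.normSq_apply, sq] using hN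
  constructor <;>
  · simp [Complex.normSq_apply, Complex.div_re, Complex.div_im]
    ring_nf
    rw [show z.re ^ 2 * z.im ^ 2 * 2 + z.re ^ 4 + z.im ^ 4 = (z.re ^ 2 + z.im ^ 2) ^ 2 by ring]
    field_simp [h2]
    all_goals ring

lemma diffAt_zpow (m : ℤ) {z : ℂ} (hz : z ≠ 0) :
    DifferentiableAt ℝ (fun w : ℂ => w ^ m) z :=
  (differentiableAt_zpow.mpr (Or.inl hz)).restrictScalars ℝ

lemma wdz_zpow (m : ℤ) {z : ℂ} (hz : z ≠ 0) :
    wdz (fun w : ℂ => w ^ m) z = (m : ℂ) * z ^ (m - 1) := by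
  rw [wdz_of_holo (differentiableAt_zpow.mpr (Or.inl hz)), deriv_zpow]

lemma wdzbar_zpow (m : ℤ) {z : ℂ} (hz : z ≠ 0) :
    wdzbar (fun w : ℂ => w ^ m) z = 0 :=
  wdzbar_of_holo (differentiableAt_zpow.mpr (Or.inl hz))

lemma diffAt_conj_zpow (m : ℤ) {z : ℂ} (hz : z ≠ 0) :
    DifferentiableAt ℝ (fun w : ℂ => ((starRingEnd ℂ) w) ^ m) z :=
  diffAt_conj_comp (diffAt_zpow m (by simpa using hz))

lemma wdz_conj_zpow (m : ℤ) {z : ℂ} (hz : z ≠ 0) :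
    wdz (fun w : ℂ => ((starRingEnd ℂ) w) ^ m) z = 0 := by
  have := wdz_comp_conj (f := fun w : ℂ => w ^ m) (z := z)
    (diffAt_zpow m (by simpa using hz))
  rw [this, wdzbar_zpow m (by simpa using hz)]

lemma wdzbar_conj_zpow (m : ℤ) {z : ℂ} (hz : z ≠ 0) :
    wdzbar (fun w : ℂ => ((starRingEnd ℂ) w) ^ m) z
      = (m : ℂ) * ((starRingEnd ℂ) z) ^ (m - 1) := by
  have := wdzbar_comp_conj (f := fun w : ℂ => w ^ m) (z := z)
    (diffAt_zpow m (by simpa using hz))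
  rw [this, wdz_zpow m (by simpa using hz)]

def cc (β : ℝ) : ℕ → ℂ := fun a => ∏ i ∈ Finset.range a, ((β : ℂ) - i)

def Dh (β : ℝ) (a b : ℕ) : ℂ → ℂ := fun z =>
  (cc β a * cc β b) * ((Hc β z * z ^ (-(a : ℤ))) * ((starRingEnd ℂ) z) ^ (-(b : ℤ)))

lemma diffAt_HZ (β : ℝ) (a : ℕ) {z : ℂ} (hz : z ≠ 0) :
    DifferentiableAt ℝ (fun w : ℂ => Hc β w * w ^ (-(a : ℤ))) z :=
  (diffAt_Hc β hz).mul (diffAt_zpow _ hz)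

lemma diffAt_Dh (β : ℝ) (a b : ℕ) {z : ℂ} (hz : z ≠ 0) :
    DifferentiableAt ℝ (Dh β a b) z := by
  unfold Dh
  exact (((diffAt_Hc β hz).mul (diffAt_zpow _ hz)).mul
    (diffAt_conj_zpow _ hz)).const_mul _

lemma wdz_HZ (β : ℝ) (a : ℕ) {z : ℂ} (hz : z ≠ 0) :
    wdz (fun w : ℂ => Hc β w * w ^ (-(a : ℤ))) z
      = ((β : ℂ) - a) * Hc β z * z ^ (-(a : ℤ) - 1) := by
  rw [wdz_mul (diffAt_Hc β hz) (diffAt_zpow _ hz), wdz_Hc β hz, wdz_zpow _ hz,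
    zpow_sub_one₀ hz]
  push_cast
  ring

lemma wdzbar_HZ (β : ℝ) (a : ℕ) {z : ℂ} (hz : z ≠ 0) :
    wdzbar (fun w : ℂ => Hc β w * w ^ (-(a : ℤ))) z
      = (β : ℂ) * Hc β z * ((starRingEnd ℂ) z)⁻¹ * z ^ (-(a : ℤ)) := by
  rw [wdzbar_mul (diffAt_Hc β hz) (diffAt_zpow _ hz), wdzbar_Hc β hz, wdzbar_zpow _ hz]
  ring

lemma wdz_Dh (β : ℝ) (a b : ℕ) {z : ℂ} (hz : z ≠ 0) :
    wdz (Dh β a b) z = Dh β (a + 1) b z := by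
  unfold Dh
  rw [wdz_const_mul _ ((diffAt_HZ β a hz).fun_mul (diffAt_conj_zpow _ hz)),
    wdz_mul (diffAt_HZ β a hz) (diffAt_conj_zpow _ hz), wdz_HZ β a hz,
    wdz_conj_zpow _ hz]
  unfold cc
  rw [Finset.prod_range_succ,
    show (-(a : ℤ) - 1) = -((a + 1 : ℕ) : ℤ) by push_cast; ring]
  push_cast
  ring

lemma wdzbar_Dh (β : ℝ) (a b : ℕ) {z : ℂ} (hz : z ≠ 0) :
    wdzbar (Dh β a b) z = Dh β a (b + 1) z := by
  unfold Dh
  rw [wdzbar_const_mul _ ((diffAt_HZ β a hz).fun_mul (diffAt_conj_zpow _ hz)),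
    wdzbar_mul (diffAt_HZ β a hz) (diffAt_conj_zpow _ hz), wdzbar_HZ β a hz,
    wdzbar_conj_zpow _ hz]
  have hcz : (starRingEnd ℂ) z ≠ 0 := by simpa using hz
  unfold cc
  rw [Finset.prod_range_succ,
    show (-(b : ℤ) - 1) = -((b + 1 : ℕ) : ℤ) by push_cast; ring,
    show ((starRingEnd ℂ) z)⁻¹ = ((starRingEnd ℂ) z) ^ (-1 : ℤ) by simp,
    show (-((b + 1 : ℕ) : ℤ)) = -(b:ℤ) + (-1:ℤ) by push_cast; ring, zpow_add₀ hcz]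
  push_cast
  ring

lemma contDiffOn_wdz {f : ℂ → ℂ} {U : Set ℂ} (hU : IsOpen U)
    (hf : ContDiffOn ℝ (⊤ : ℕ∞) f U) : ContDiffOn ℝ (⊤ : ℕ∞) (wdz f) U := by
  have h : ContDiffOn ℝ (⊤ : ℕ∞) (fderiv ℝ f) U :=
    hf.fderiv_of_isOpen hU (by simp)
  have h1 : ContDiffOn ℝ (⊤ : ℕ∞) (fun z => fderiv ℝ f z 1) U :=
    h.clm_apply contDiffOn_const
  have h2 : ContDiffOn ℝ (⊤ : ℕ∞) (fun z => fderiv ℝ f z Complex.I) U :=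
    h.clm_apply contDiffOn_const
  have : ContDiffOn ℝ (⊤ : ℕ∞)
      (fun z => (fderiv ℝ f z 1 - Complex.I * fderiv ℝ f z Complex.I) / 2) U := by
    exact ((h1.sub (contDiffOn_const.mul h2)).div_const 2)
  exact this

lemma contDiffOn_wdzbar {f : ℂ → ℂ} {U : Set ℂ} (hU : IsOpen U)
    (hf : ContDiffOn ℝ (⊤ : ℕ∞) f U) : ContDiffOn ℝ (⊤ : ℕ∞) (wdzbar f) U := by
  have h : ContDiffOn ℝ (⊤ : ℕ∞) (fderiv ℝ f) U :=
    hf.fderiv_of_isOpen hU (by simp)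
  have h1 : ContDiffOn ℝ (⊤ : ℕ∞) (fun z => fderiv ℝ f z 1) U :=
    h.clm_apply contDiffOn_const
  have h2 : ContDiffOn ℝ (⊤ : ℕ∞) (fun z => fderiv ℝ f z Complex.I) U :=
    h.clm_apply contDiffOn_const
  exact ((h1.add (contDiffOn_const.mul h2)).div_const 2)

lemma contDiffOn_wdz_iter {f : ℂ → ℂ} {U : Set ℂ} (hU : IsOpen U)
    (hf : ContDiffOn ℝ (⊤ : ℕ∞) f U) (p : ℕ) :
    ContDiffOn ℝ (⊤ : ℕ∞) (wdz^[p] f) U := by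
  induction p with
  | zero => exact hf
  | succ p ih => rw [Function.iterate_succ_apply']; exact contDiffOn_wdz hU ih

lemma contDiffOn_wdzbar_iter {f : ℂ → ℂ} {U : Set ℂ} (hU : IsOpen U)
    (hf : ContDiffOn ℝ (⊤ : ℕ∞) f U) (q : ℕ) :
    ContDiffOn ℝ (⊤ : ℕ∞) (wdzbar^[q] f) U := by
  induction q with
  | zero => exact hf
  | succ q ih => rw [Function.iterate_succ_apply']; exact contDiffOn_wdzbar hU ih

lemma diffAt_of_contDiffOn {f : ℂ → ℂ} {U : Set ℂ} (hU : IsOpen U)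
    (hf : ContDiffOn ℝ (⊤ : ℕ∞) f U) {z : ℂ} (hz : z ∈ U) :
    DifferentiableAt ℝ f z :=
  (hf.differentiableOn (by simp)).differentiableAt (hU.mem_nhds hz)

lemma contDiff_normSqC : ContDiff ℝ (⊤ : ℕ∞) (fun w : ℂ => Complex.normSq w) := by
  have : (fun w : ℂ => Complex.normSq w)
      = fun w : ℂ => Complex.reCLM w * Complex.reCLM w + Complex.imCLM w * Complex.imCLM w := by
    funext w; simp [Complex.normSq_apply]
  rw [this]
  exact (Complex.reCLM.contDiff.mul Complex.reCLM.contDiff).add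
    (Complex.imCLM.contDiff.mul Complex.imCLM.contDiff)

lemma contDiffOn_Hc (β : ℝ) : ContDiffOn ℝ (⊤ : ℕ∞) (Hc β) {(0 : ℂ)}ᶜ := by
  have hr : ContDiffOn ℝ (⊤ : ℕ∞) (fun x : ℝ => x ^ β) {(0 : ℝ)}ᶜ := fun x hx =>
    (Real.contDiffAt_rpow_const_of_ne (by simpa using hx)).contDiffWithinAt
  have hmaps : Set.MapsTo (fun w : ℂ => Complex.normSq w) {(0 : ℂ)}ᶜ {(0 : ℝ)}ᶜ := by
    intro w hw
    simp only [Set.mem_compl_iff, Set.mem_singleton_iff] at *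
    exact ne_of_gt (Complex.normSq_pos.2 hw)
  have h1 : ContDiffOn ℝ (⊤ : ℕ∞) (fun w : ℂ => Complex.normSq w ^ β) {(0 : ℂ)}ᶜ :=
    hr.comp contDiff_normSqC.contDiffOn hmaps
  exact Complex.ofRealCLM.contDiff.comp_contDiffOn h1

lemma contDiffOn_zpow_neg (a : ℕ) :
    ContDiffOn ℝ (⊤ : ℕ∞) (fun w : ℂ => w ^ (-(a : ℤ))) {(0 : ℂ)}ᶜ := by
  have : (fun w : ℂ => w ^ (-(a : ℤ))) = fun w : ℂ => (w ^ a)⁻¹ := by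
    funext w; rw [zpow_neg, zpow_natCast]
  rw [this]
  exact (contDiff_id.pow a).contDiffOn.inv fun x hx =>
    pow_ne_zero a (by simpa using hx)

lemma contDiffOn_conj_zpow_neg (b : ℕ) :
    ContDiffOn ℝ (⊤ : ℕ∞) (fun w : ℂ => ((starRingEnd ℂ) w) ^ (-(b : ℤ))) {(0 : ℂ)}ᶜ := by
  have hconj : ContDiff ℝ (⊤ : ℕ∞) (fun w : ℂ => (starRingEnd ℂ) w) := by
    have := Complex.conjCLE.toContinuousLinearMap.contDiff (n := (⊤ : ℕ∞))
    exact this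
  have hmaps : Set.MapsTo (fun w : ℂ => (starRingEnd ℂ) w) {(0 : ℂ)}ᶜ {(0 : ℂ)}ᶜ := by
    intro w hw
    simp only [Set.mem_compl_iff, Set.mem_singleton_iff] at *
    simpa using hw
  exact (contDiffOn_zpow_neg b).comp hconj.contDiffOn hmaps

lemma contDiffOn_Dh (β : ℝ) (a b : ℕ) :
    ContDiffOn ℝ (⊤ : ℕ∞) (Dh β a b) {(0 : ℂ)}ᶜ := by
  unfold Dh
  exact contDiffOn_const.mul (((contDiffOn_Hc β).mul (contDiffOn_zpow_neg a)).mul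
    (contDiffOn_conj_zpow_neg b))

lemma eqOn_wdz_iter {f g : ℂ → ℂ} {U : Set ℂ} (hU : IsOpen U) (h : Set.EqOn f g U)
    (p : ℕ) : Set.EqOn (wdz^[p] f) (wdz^[p] g) U := by
  induction p with
  | zero => exact h
  | succ p ih =>
      intro z hz
      rw [Function.iterate_succ_apply', Function.iterate_succ_apply']
      exact wdz_congr hU ih hz

lemma eqOn_wdzbar_iter {f g : ℂ → ℂ} {U : Set ℂ} (hU : IsOpen U) (h : Set.EqOn f g U)
    (q : ℕ) : Set.EqOn (wdzbar^[q] f) (wdzbar^[q] g) U := by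
  induction q with
  | zero => exact h
  | succ q ih =>
      intro z hz
      rw [Function.iterate_succ_apply', Function.iterate_succ_apply']
      exact wdzbar_congr hU ih hz

lemma wdz_iter_sum {ι : Type*} {U : Set ℂ} (hU : IsOpen U) (s : Finset ι)
    {G : ι → ℂ → ℂ} (hG : ∀ i ∈ s, ContDiffOn ℝ (⊤ : ℕ∞) (G i) U) (p : ℕ) :
    Set.EqOn (wdz^[p] (fun w => ∑ i ∈ s, G i w))
      (fun z => ∑ i ∈ s, wdz^[p] (G i) z) U := by
  induction p with
  | zero => intro z hz; simp
  | succ p ih =>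
      intro z hz
      rw [Function.iterate_succ_apply', wdz_congr hU ih hz]
      rw [wdz_sum s fun i hi =>
        diffAt_of_contDiffOn hU (contDiffOn_wdz_iter hU (hG i hi) p) hz]
      exact Finset.sum_congr rfl fun i hi => by
        rw [show wdz^[p+1] (G i) = wdz (wdz^[p] (G i)) from Function.iterate_succ_apply' wdz p (G i)]

lemma wdz_iter_const_mul {U : Set ℂ} (hU : IsOpen U) (c : ℂ) {f : ℂ → ℂ}
    (hf : ContDiffOn ℝ (⊤ : ℕ∞) f U) (p : ℕ) :
    Set.EqOn (wdz^[p] (fun w => c * f w)) (fun z => c * wdz^[p] f z) U := by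
  induction p with
  | zero => intro z hz; simp
  | succ p ih =>
      intro z hz
      rw [Function.iterate_succ_apply', wdz_congr hU ih hz,
        wdz_const_mul c (diffAt_of_contDiffOn hU (contDiffOn_wdz_iter hU hf p) hz)]
      rw [show wdz^[p+1] f = wdz (wdz^[p] f) from Function.iterate_succ_apply' wdz p f]

lemma pascal_sum (p : ℕ) (A : ℕ → ℂ) :
    ∑ r ∈ Finset.range (p + 1), (p.choose r : ℂ) * (A r + A (r + 1))
      = ∑ r ∈ Finset.range (p + 2), ((p + 1).choose r : ℂ) * A r := by
  have key : ∀ i, ((p + 1).choose (i + 1) : ℂ) = (p.choose i : ℂ) + (p.choose (i + 1) : ℂ) := by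
    intro i; exact_mod_cast Nat.choose_succ_succ p i
  rw [Finset.sum_range_succ' (fun r => ((p + 1).choose r : ℂ) * A r) (p + 1)]
  simp only [key, Nat.choose_zero_right, Nat.cast_one, one_mul, add_mul]
  rw [Finset.sum_add_distrib]
  have h2 : ∑ i ∈ Finset.range (p + 1), (p.choose (i + 1) : ℂ) * A (i + 1)
      = ∑ i ∈ Finset.range p, (p.choose (i + 1) : ℂ) * A (i + 1) := by
    rw [Finset.sum_range_succ, Nat.choose_succ_self]
    simp
  have h3 : ∑ r ∈ Finset.range (p + 1), (p.choose r : ℂ) * A r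
      = (∑ i ∈ Finset.range p, (p.choose (i + 1) : ℂ) * A (i + 1)) + A 0 := by
    rw [Finset.sum_range_succ' (fun r => (p.choose r : ℂ) * A r) p]
    simp
  simp only [mul_add]
  rw [Finset.sum_add_distrib, h2, h3]
  ring

lemma wdzbar_sum {ι : Type*} (s : Finset ι) {F : ι → ℂ → ℂ} {z : ℂ}
    (hF : ∀ i ∈ s, DifferentiableAt ℝ (F i) z) :
    wdzbar (fun w => ∑ i ∈ s, F i w) z = ∑ i ∈ s, wdzbar (F i) z := by
  unfold wdzbar
  rw [fderiv_fun_sum hF]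
  simp only [ContinuousLinearMap.sum_apply]
  rw [Finset.mul_sum, ← Finset.sum_add_distrib, Finset.sum_div]

lemma leibZ {β : ℝ} {U : Set ℂ} (hU : IsOpen U) (hne : ∀ w ∈ U, w ≠ 0)
    {F : ℂ → ℂ} (hF : ContDiffOn ℝ (⊤ : ℕ∞) F U) (b : ℕ) (p : ℕ) :
    Set.EqOn (wdz^[p] (fun w => Dh β 0 b w * F w))
      (fun z => ∑ r ∈ Finset.range (p + 1),
        (p.choose r : ℂ) * (Dh β (p - r) b z * wdz^[r] F z)) U := by
  induction p with
  | zero => intro z hz; simp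
  | succ p ih =>
      intro z hz
      rw [Function.iterate_succ_apply', wdz_congr hU ih hz]
      have hdiff : ∀ r ∈ Finset.range (p + 1), DifferentiableAt ℝ
          (fun w => (p.choose r : ℂ) * (Dh β (p - r) b w * wdz^[r] F w)) z :=
        fun r _ => (((diffAt_Dh β _ _ (hne z hz)).mul
          (diffAt_of_contDiffOn hU (contDiffOn_wdz_iter hU hF r) hz)).const_mul _)
      rw [wdz_sum (Finset.range (p + 1)) hdiff]
      have hterm : ∀ r ∈ Finset.range (p + 1),
          wdz (fun w => (p.choose r : ℂ) * (Dh β (p - r) b w * wdz^[r] F w)) z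
            = (p.choose r : ℂ) * ((Dh β (p + 1 - r) b z * wdz^[r] F z)
                + (Dh β (p + 1 - (r + 1)) b z * wdz^[r + 1] F z)) := by
        intro r hr
        have hrp : r ≤ p := Nat.lt_succ_iff.mp (Finset.mem_range.mp hr)
        have hd1 : DifferentiableAt ℝ (Dh β (p - r) b) z := diffAt_Dh β _ _ (hne z hz)
        have hd2 : DifferentiableAt ℝ (wdz^[r] F) z :=
          diffAt_of_contDiffOn hU (contDiffOn_wdz_iter hU hF r) hz
        rw [wdz_const_mul _ (hd1.fun_mul hd2), wdz_mul hd1 hd2, wdz_Dh β _ _ (hne z hz),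
          show wdz^[r + 1] F = wdz (wdz^[r] F) from Function.iterate_succ_apply' wdz r F,
          show p - r + 1 = p + 1 - r from (Nat.succ_sub hrp).symm,
          show p + 1 - (r + 1) = p - r from Nat.succ_sub_succ p r]
      rw [Finset.sum_congr rfl hterm,
        pascal_sum p (fun r => Dh β (p + 1 - r) b z * wdz^[r] F z)]

lemma leibZbar {β : ℝ} {U : Set ℂ} (hU : IsOpen U) (hne : ∀ w ∈ U, w ≠ 0)
    {F : ℂ → ℂ} (hF : ContDiffOn ℝ (⊤ : ℕ∞) F U) (a : ℕ) (q : ℕ) :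
    Set.EqOn (wdzbar^[q] (fun w => Dh β a 0 w * F w))
      (fun z => ∑ s ∈ Finset.range (q + 1),
        (q.choose s : ℂ) * (Dh β a (q - s) z * wdzbar^[s] F z)) U := by
  induction q with
  | zero => intro z hz; simp
  | succ q ih =>
      intro z hz
      rw [Function.iterate_succ_apply', wdzbar_congr hU ih hz]
      have hdiff : ∀ s ∈ Finset.range (q + 1), DifferentiableAt ℝ
          (fun w => (q.choose s : ℂ) * (Dh β a (q - s) w * wdzbar^[s] F w)) z :=
        fun s _ => (((diffAt_Dh β _ _ (hne z hz)).mul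
          (diffAt_of_contDiffOn hU (contDiffOn_wdzbar_iter hU hF s) hz)).const_mul _)
      rw [wdzbar_sum (Finset.range (q + 1)) hdiff]
      have hterm : ∀ s ∈ Finset.range (q + 1),
          wdzbar (fun w => (q.choose s : ℂ) * (Dh β a (q - s) w * wdzbar^[s] F w)) z
            = (q.choose s : ℂ) * ((Dh β a (q + 1 - s) z * wdzbar^[s] F z)
                + (Dh β a (q + 1 - (s + 1)) z * wdzbar^[s + 1] F z)) := by
        intro s hs
        have hsq : s ≤ q := Nat.lt_succ_iff.mp (Finset.mem_range.mp hs)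
        have hd1 : DifferentiableAt ℝ (Dh β a (q - s)) z := diffAt_Dh β _ _ (hne z hz)
        have hd2 : DifferentiableAt ℝ (wdzbar^[s] F) z :=
          diffAt_of_contDiffOn hU (contDiffOn_wdzbar_iter hU hF s) hz
        rw [wdzbar_const_mul _ (hd1.fun_mul hd2), wdzbar_mul hd1 hd2,
          wdzbar_Dh β _ _ (hne z hz),
          show wdzbar^[s + 1] F = wdzbar (wdzbar^[s] F)
            from Function.iterate_succ_apply' wdzbar s F,
          show q - s + 1 = q + 1 - s from (Nat.succ_sub hsq).symm,
          show q + 1 - (s + 1) = q - s from Nat.succ_sub_succ q s]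
      rw [Finset.sum_congr rfl hterm,
        pascal_sum q (fun s => Dh β a (q + 1 - s) z * wdzbar^[s] F z)]

lemma leib_full {β : ℝ} {U : Set ℂ} (hU : IsOpen U) (hne : ∀ w ∈ U, w ≠ 0)
    {f g : ℂ → ℂ} (hf : ContDiffOn ℝ (⊤ : ℕ∞) f U)
    (hg : Set.EqOn g (fun w => Dh β 0 0 w * f w) U) (p q : ℕ) {z : ℂ} (hz : z ∈ U) :
    wdz^[p] (wdzbar^[q] g) z
      = ∑ r ∈ Finset.range (p + 1), ∑ s ∈ Finset.range (q + 1),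
          ((p.choose r : ℂ) * (q.choose s : ℂ))
            * (Dh β (p - r) (q - s) z * wdz^[r] (wdzbar^[s] f) z) := by
  have hsub : U ⊆ {(0 : ℂ)}ᶜ := fun w hw => hne w hw
  -- Step 1: expand the inner wdzbar iterate
  have h1 : Set.EqOn (wdzbar^[q] g)
      (fun z => ∑ s ∈ Finset.range (q + 1),
        (q.choose s : ℂ) * (Dh β 0 (q - s) z * wdzbar^[s] f z)) U :=
    (eqOn_wdzbar_iter hU hg q).trans (leibZbar hU hne hf 0 q)
  have h2 := eqOn_wdz_iter hU h1 p hz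
  rw [h2]
  -- Step 2: push wdz^[p] through the sum
  have hsmooth : ∀ s ∈ Finset.range (q + 1), ContDiffOn ℝ (⊤ : ℕ∞)
      (fun w => (q.choose s : ℂ) * (Dh β 0 (q - s) w * wdzbar^[s] f w)) U :=
    fun s _ => contDiffOn_const.mul (((contDiffOn_Dh β 0 (q - s)).mono hsub).mul
      (contDiffOn_wdzbar_iter hU hf s))
  rw [wdz_iter_sum hU (Finset.range (q + 1)) hsmooth p hz]
  rw [Finset.sum_comm]
  refine Finset.sum_congr rfl fun s hs => ?_
  have hmul : ContDiffOn ℝ (⊤ : ℕ∞) (fun w => Dh β 0 (q - s) w * wdzbar^[s] f w) U :=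
    ((contDiffOn_Dh β 0 (q - s)).mono hsub).mul (contDiffOn_wdzbar_iter hU hf s)
  rw [wdz_iter_const_mul hU _ hmul p hz]
  beta_reduce
  rw [leibZ hU hne (contDiffOn_wdzbar_iter hU hf s) (q - s) p hz]
  rw [Finset.mul_sum]
  refine Finset.sum_congr rfl fun r hr => ?_
  ring

/-- For `g(z) = |z|^{2β} f(z)` with `f` smooth on an open
`Ω ⊆ ℂ∖{0}` and `β ∈ ℝ`, one has `det_k(g) = |z|^{2kβ} det_k(f)` at every point of
`Ω` where `det_j(f) ≠ 0` for all `1 ≤ j ≤ k−1`. -/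
theorem detk_rpow_mul (Ω : Set ℂ) (hΩ : IsOpen Ω) (hΩ0 : (0 : ℂ) ∉ Ω)
    (f : ℂ → ℂ) (hf : ContDiffOn ℝ (⊤ : ℕ∞) f Ω) (β : ℝ)
    (g : ℂ → ℂ) (hg : g = fun z => (((‖z‖) ^ (2 * β) : ℝ) : ℂ) * f z)
    (k : ℕ) (hk : 1 ≤ k) (z : ℂ) (hz : z ∈ Ω)
    (hdet : ∀ j, 1 ≤ j → j ≤ k - 1 → detk j f z ≠ 0) :
    detk k g z = (((‖z‖) ^ (2 * (k : ℝ) * β) : ℝ) : ℂ) * detk k f z := by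
  have hne : ∀ w ∈ Ω, w ≠ 0 := fun w hw h0 => hΩ0 (h0 ▸ hw)
  have hz0 : z ≠ 0 := hne z hz
  have habs : ∀ w : ℂ, ((‖w‖ ^ (2 * β) : ℝ) : ℂ) = Hc β w := by
    intro w
    unfold Hc
    norm_cast
    rw [Complex.norm_def, Real.sqrt_eq_rpow, ← Real.rpow_mul (Complex.normSq_nonneg w)]
    congr 1
    ring
  have hgEq : Set.EqOn g (fun w => Dh β 0 0 w * f w) Ω := by
    intro w _
    rw [hg]
    simp only [Dh, cc]
    rw [habs w]
    simp
  -- abbreviations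
  set ee : ℕ → ℕ → ℂ := fun r s => wdz^[r] (wdzbar^[s] f) z with hee
  set aa : ℕ → ℕ → ℂ := fun p r =>
    if r ≤ p then (p.choose r : ℂ) * (cc β (p - r) * z ^ (-((p - r : ℕ) : ℤ))) else 0 with haa
  set bb : ℕ → ℕ → ℂ := fun q s =>
    if s ≤ q then (q.choose s : ℂ) *
      (cc β (q - s) * ((starRingEnd ℂ) z) ^ (-((q - s : ℕ) : ℤ))) else 0 with hbb
  have key : ∀ p q : Fin k, wdz^[(p : ℕ)] (wdzbar^[(q : ℕ)] g) z
      = Hc β z * ∑ r ∈ Finset.range k, ∑ s ∈ Finset.range k,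
          aa p r * ee r s * bb q s := by
    intro p q
    rw [leib_full hΩ hne hf hgEq (p : ℕ) (q : ℕ) hz]
    have step1 : ∀ r ∈ Finset.range ((p : ℕ) + 1),
        ∑ s ∈ Finset.range ((q : ℕ) + 1),
          (((p : ℕ).choose r : ℂ) * ((q : ℕ).choose s : ℂ))
            * (Dh β ((p : ℕ) - r) ((q : ℕ) - s) z * wdz^[r] (wdzbar^[s] f) z)
        = ∑ s ∈ Finset.range k, Hc β z * (aa p r * ee r s * bb q s) := by
      intro r hr
      have hrp : r ≤ (p : ℕ) := Nat.lt_succ_iff.mp (Finset.mem_range.mp hr)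
      have e1 : ∀ s ∈ Finset.range ((q : ℕ) + 1),
          (((p : ℕ).choose r : ℂ) * ((q : ℕ).choose s : ℂ))
            * (Dh β ((p : ℕ) - r) ((q : ℕ) - s) z * wdz^[r] (wdzbar^[s] f) z)
          = Hc β z * (aa p r * ee r s * bb q s) := by
        intro s hs
        have hsq : s ≤ (q : ℕ) := Nat.lt_succ_iff.mp (Finset.mem_range.mp hs)
        simp only [haa, hbb, hee, if_pos hrp, if_pos hsq]
        unfold Dh
        ring
      rw [Finset.sum_congr rfl e1]
      refine Finset.sum_subset (Finset.range_subset_range.mpr (Nat.succ_le_of_lt q.isLt))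
        (fun s _ hs => ?_)
      have hsq : ¬ s ≤ (q : ℕ) := by
        simp only [Finset.mem_range, Nat.lt_succ_iff] at hs; exact hs
      simp [hbb, if_neg hsq]
    rw [Finset.sum_congr rfl step1]
    rw [Finset.sum_subset (Finset.range_subset_range.mpr (Nat.succ_le_of_lt p.isLt))
      (fun r hrk hr => ?_)]
    · rw [Finset.mul_sum]
      exact Finset.sum_congr rfl fun r _ => (Finset.mul_sum _ _ _).symm
    · have hrp : ¬ r ≤ (p : ℕ) := by
        simp only [Finset.mem_range, Nat.lt_succ_iff] at hr; exact hr
      simp [haa, if_neg hrp]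
  set A : Matrix (Fin k) (Fin k) ℂ := Matrix.of fun p r : Fin k => aa p r with hA
  set B : Matrix (Fin k) (Fin k) ℂ := Matrix.of fun q s : Fin k => bb q s with hB
  set M : Matrix (Fin k) (Fin k) ℂ := Matrix.of fun r s : Fin k => ee r s with hMdef
  have hM : (Matrix.of fun p q : Fin k => wdz^[(p : ℕ)] (wdzbar^[(q : ℕ)] g) z)
      = Hc β z • (A * M * B.transpose) := by
    ext p q
    rw [Matrix.smul_apply, Matrix.of_apply, key p q, smul_eq_mul]
    congr 1
    rw [Matrix.mul_apply]
    simp only [Matrix.mul_apply, Matrix.transpose_apply, hA, hB, hMdef, Matrix.of_apply,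
      Finset.sum_mul]
    rw [Finset.sum_comm]
    have conv1 : (∑ x : Fin k, ∑ i : Fin k, aa (p : ℕ) (i : ℕ) * ee (i : ℕ) (x : ℕ) * bb (q : ℕ) (x : ℕ))
        = ∑ x ∈ Finset.range k, ∑ i ∈ Finset.range k, aa (p : ℕ) i * ee i x * bb (q : ℕ) x := by
      rw [Fin.sum_univ_eq_sum_range
        (fun x => ∑ i : Fin k, aa (p : ℕ) (i : ℕ) * ee (i : ℕ) x * bb (q : ℕ) x) k]
      exact Finset.sum_congr rfl fun x _ =>
        Fin.sum_univ_eq_sum_range (fun i => aa (p : ℕ) i * ee i x * bb (q : ℕ) x) k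
    rw [conv1]
  have detA : A.det = 1 := by
    have ht : A.BlockTriangular OrderDual.toDual := by
      intro i j hij
      have hlt : (i : ℕ) < (j : ℕ) := hij
      simp only [hA, Matrix.of_apply, haa]
      rw [if_neg (by omega)]
    rw [Matrix.det_of_lowerTriangular A ht]
    refine Finset.prod_eq_one fun i _ => ?_
    simp [hA, haa, cc]
  have detB : B.det = 1 := by
    have ht : B.BlockTriangular OrderDual.toDual := by
      intro i j hij
      have hlt : (i : ℕ) < (j : ℕ) := hij
      simp only [hB, Matrix.of_apply, hbb]
      rw [if_neg (by omega)]
    rw [Matrix.det_of_lowerTriangular B ht]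
    refine Finset.prod_eq_one fun i _ => ?_
    simp [hB, hbb, cc]
  have hsc : ((‖z‖ ^ (2 * (k : ℝ) * β) : ℝ) : ℂ) = Hc β z ^ k := by
    unfold Hc
    rw [← Complex.ofReal_pow]
    norm_cast
    rw [Complex.norm_def, Real.sqrt_eq_rpow, ← Real.rpow_mul (Complex.normSq_nonneg z),
      ← Real.rpow_natCast (Complex.normSq z ^ β) k,
      ← Real.rpow_mul (Complex.normSq_nonneg z)]
    congr 1
    push_cast
    ring
  unfold detk
  rw [hM, Matrix.det_smul, Matrix.det_mul, Matrix.det_mul, Matrix.det_transpose, detA, detB,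
    hsc]
  simp only [Fintype.card_fin, one_mul, mul_one]
  rfl
end
end

section
/- Let n ≥ 1, μ_1,…,μ_n > 0, γ_i = μ_i − 1, λ_0,…,λ_n ∈ ℝ, c_{ij} ∈ ℂ, and on the slit plane ℂ∖(−∞,0] (with principal branch powers) define f̃(z) = λ_0 + Σ_{i=1}^n λ_i |P_i(z)|², where P_i(z) = z^{μ_1+⋯+μ_i} + Σ_{j=1}^{i−1} c_{ij} z^{μ_1+⋯+μ_j} + c_{i0}. Then det_{n+1}(f̃) = λ_0 λ_1 ⋯ λ_n · ∏_{1 ≤ i ≤ j ≤ n} (μ_i + μ_{i+1} + ⋯ + μ_j)² · |z|^{2nγ_1 + 2(n−1)γ_2 + ⋯ + 2γ_n} on ℂ∖(−∞,0]. -/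
open Complex Finset MeasureTheory

noncomputable section

def wirtCLM (a b : ℂ) : ℂ →L[ℝ] ℂ :=
  a • (ContinuousLinearMap.id ℝ ℂ) + b • (Complex.conjCLE : ℂ ≃L[ℝ] ℂ).toContinuousLinearMap

lemma wirtCLM_apply (a b v : ℂ) : wirtCLM a b v = a * v + b * (starRingEnd ℂ) v := by
  simp [wirtCLM, Complex.conjCLE_apply, smul_eq_mul]

def HasWirt (f : ℂ → ℂ) (z a b : ℂ) : Prop := HasFDerivAt f (wirtCLM a b) z

lemma HasWirt.wdz_eq {f z a b} (h : HasWirt f z a b) : wdz f z = a := by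
  unfold wdz; rw [h.fderiv, wirtCLM_apply, wirtCLM_apply]
  simp only [map_one, Complex.conj_I, mul_one]
  have : Complex.I * Complex.I = -1 := Complex.I_mul_I
  field_simp
  ring_nf
  rw [Complex.I_sq]
  ring

lemma HasWirt.wdzbar_eq {f z a b} (h : HasWirt f z a b) : wdzbar f z = b := by
  unfold wdzbar; rw [h.fderiv, wirtCLM_apply, wirtCLM_apply]
  simp only [map_one, Complex.conj_I, mul_one]
  field_simp
  ring_nf
  rw [Complex.I_sq]
  ring

lemma hasWirt_of_hasDerivAt {g : ℂ → ℂ} {g' z : ℂ} (h : HasDerivAt g g' z) :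
    HasWirt g z g' 0 := by
  have h0 := (h.hasFDerivAt.restrictScalars ℝ)
  have : (ContinuousLinearMap.smulRight (1 : ℂ →L[ℂ] ℂ) g').restrictScalars ℝ = wirtCLM g' 0 := by
    refine ContinuousLinearMap.ext fun v => ?_
    rw [wirtCLM_apply]
    simp [smul_eq_mul, mul_comm]
  unfold HasWirt; rwa [← this]

lemma HasWirt.conj {g : ℂ → ℂ} {z a b : ℂ} (h : HasWirt g z a b) :
    HasWirt (fun w => (starRingEnd ℂ) (g w)) z ((starRingEnd ℂ) b) ((starRingEnd ℂ) a) := by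
  have h2 := (Complex.conjCLE.toContinuousLinearMap.hasFDerivAt (x := g z)).comp z h
  have : Complex.conjCLE.toContinuousLinearMap.comp (wirtCLM a b)
      = wirtCLM ((starRingEnd ℂ) b) ((starRingEnd ℂ) a) := by
    refine ContinuousLinearMap.ext fun v => ?_
    simp [wirtCLM_apply, Complex.conjCLE_apply, map_add, map_mul, mul_comm]
    ring
  unfold HasWirt; rw [← this]; exact h2

lemma hasWirt_const (z c : ℂ) : HasWirt (fun _ => c) z 0 0 := by
  have : wirtCLM 0 0 = 0 := by
    refine ContinuousLinearMap.ext fun v => ?_; simp [wirtCLM_apply]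
  unfold HasWirt; rw [this]; exact hasFDerivAt_const c z

lemma HasWirt.mul {f g : ℂ → ℂ} {z a b a' b' : ℂ}
    (hf : HasWirt f z a b) (hg : HasWirt g z a' b') :
    HasWirt (fun w => f w * g w) z (a * g z + f z * a') (b * g z + f z * b') := by
  have h := HasFDerivAt.mul' hf hg
  have : f z • wirtCLM a' b' + (wirtCLM a b).smulRight (g z)
      = wirtCLM (a * g z + f z * a') (b * g z + f z * b') := by
    refine ContinuousLinearMap.ext fun v => ?_
    simp [wirtCLM_apply, smul_eq_mul]; ring
  unfold HasWirt; rw [← this]; exact h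

lemma HasWirt.const_mul {f : ℂ → ℂ} {z a b : ℂ} (c : ℂ) (hf : HasWirt f z a b) :
    HasWirt (fun w => c * f w) z (c * a) (c * b) := by
  have := (hasWirt_const z c).mul hf
  simpa using this

lemma hasWirt_sum {ι : Type*} (s : Finset ι) {F : ι → ℂ → ℂ} {z : ℂ} {a b : ι → ℂ}
    (h : ∀ i ∈ s, HasWirt (F i) z (a i) (b i)) :
    HasWirt (fun w => ∑ i ∈ s, F i w) z (∑ i ∈ s, a i) (∑ i ∈ s, b i) := by
  have hsum := HasFDerivAt.fun_sum h
  have : (∑ i ∈ s, wirtCLM (a i) (b i)) = wirtCLM (∑ i ∈ s, a i) (∑ i ∈ s, b i) := by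
    refine ContinuousLinearMap.ext fun v => ?_
    simp [wirtCLM_apply, Finset.sum_add_distrib, Finset.sum_mul]
  unfold HasWirt; rw [← this]; exact hsum

lemma wdz_congr_s12 {f g : ℂ → ℂ} {z : ℂ} (h : f =ᶠ[nhds z] g) : wdz f z = wdz g z := by
  unfold wdz; rw [h.fderiv_eq]

lemma wdzbar_congr_s12 {f g : ℂ → ℂ} {z : ℂ} (h : f =ᶠ[nhds z] g) : wdzbar f z = wdzbar g z := by
  unfold wdzbar; rw [h.fderiv_eq]

lemma hasWirt_cpow {z : ℂ} (hz : z ∈ Complex.slitPlane) (c : ℂ) :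
    HasWirt (fun w => w ^ c) z (c * z ^ (c - 1)) 0 := by
  have h := (hasDerivAt_id z).cpow_const (c := c) (by simpa using hz)
  simpa using hasWirt_of_hasDerivAt h

lemma HasWirt.congr_all {f g : ℂ → ℂ} {z a b a' b' : ℂ} (h : HasWirt f z a b)
    (hfg : ∀ w, g w = f w) (ha : a' = a) (hb : b' = b) : HasWirt g z a' b' := by
  subst ha; subst hb
  unfold HasWirt at *
  rwa [funext hfg]

/-- auxiliary bianalytic sums -/
def Ff (N : ℕ) (A : ℕ → ℕ → ℂ) (e : ℕ → ℂ) (p q : ℕ) : ℂ → ℂ :=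
  fun z => ∑ j ∈ range N, ∑ k ∈ range N,
    A j k * ((∏ t ∈ range p, (e j - t)) * z ^ (e j - p))
      * (starRingEnd ℂ) ((∏ t ∈ range q, (e k - t)) * z ^ (e k - q))

lemma hasWirt_monom {z : ℂ} (hz : z ∈ Complex.slitPlane) (c : ℂ) (p : ℕ) :
    HasWirt (fun w : ℂ => (∏ t ∈ range p, (c - t)) * w ^ (c - p)) z
      ((∏ t ∈ range (p + 1), (c - t)) * z ^ (c - (p + 1 : ℕ))) 0 := by
  have hW := (hasWirt_cpow hz (c - p)).const_mul (∏ t ∈ range p, (c - t))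
  rw [mul_zero] at hW
  refine hW.congr_all (fun w => rfl) ?_ rfl
  rw [Finset.prod_range_succ,
    show (((p + 1 : ℕ) : ℂ)) = (p : ℂ) + 1 by push_cast; ring,
    show c - ((p : ℂ) + 1) = c - p - 1 by ring]
  ring

lemma hasWirt_Ff (N : ℕ) (A : ℕ → ℕ → ℂ) (e : ℕ → ℂ) (p q : ℕ) {z : ℂ}
    (hz : z ∈ Complex.slitPlane) :
    HasWirt (Ff N A e p q) z (Ff N A e (p + 1) q z) (Ff N A e p (q + 1) z) := by
  unfold Ff
  refine hasWirt_sum _ fun j _ => ?_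
  refine hasWirt_sum _ fun k _ => ?_
  have h1 := hasWirt_monom hz (e j) p
  have h2 := (hasWirt_monom hz (e k) q).conj
  rw [map_zero] at h2
  have h3 := (h1.mul h2).const_mul (A j k)
  refine h3.congr_all (fun w => by ring) (by ring) (by ring)

lemma eventuallyEq_of_slitPlane {g₁ g₂ : ℂ → ℂ} (h : ∀ w ∈ Complex.slitPlane, g₁ w = g₂ w)
    {z : ℂ} (hz : z ∈ Complex.slitPlane) : g₁ =ᶠ[nhds z] g₂ :=
  Filter.eventually_iff_exists_mem.2
    ⟨Complex.slitPlane, Complex.isOpen_slitPlane.mem_nhds hz, h⟩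

lemma iter_wdz_congr {g₁ g₂ : ℂ → ℂ} (h : ∀ w ∈ Complex.slitPlane, g₁ w = g₂ w) (p : ℕ) :
    ∀ z ∈ Complex.slitPlane, wdz^[p] g₁ z = wdz^[p] g₂ z := by
  induction p with
  | zero => simpa using h
  | succ p ih =>
    intro z hz
    rw [Function.iterate_succ_apply', Function.iterate_succ_apply']
    exact wdz_congr_s12 (eventuallyEq_of_slitPlane ih hz)

lemma iter_wdzbar_Ff (N : ℕ) (A : ℕ → ℕ → ℂ) (e : ℕ → ℂ) (p₀ q₀ q : ℕ) :
    ∀ z ∈ Complex.slitPlane, wdzbar^[q] (Ff N A e p₀ q₀) z = Ff N A e p₀ (q₀ + q) z := by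
  induction q with
  | zero => intro z _; simp
  | succ q ih =>
    intro z hz
    rw [Function.iterate_succ_apply',
      wdzbar_congr_s12 (eventuallyEq_of_slitPlane ih hz),
      (hasWirt_Ff N A e p₀ (q₀ + q) hz).wdzbar_eq, ← Nat.add_assoc]

lemma iter_wdz_Ff (N : ℕ) (A : ℕ → ℕ → ℂ) (e : ℕ → ℂ) (p₀ q₀ p : ℕ) :
    ∀ z ∈ Complex.slitPlane, wdz^[p] (Ff N A e p₀ q₀) z = Ff N A e (p₀ + p) q₀ z := by
  induction p with
  | zero => intro z _; simp
  | succ p ih =>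
    intro z hz
    rw [Function.iterate_succ_apply',
      wdz_congr_s12 (eventuallyEq_of_slitPlane ih hz),
      (hasWirt_Ff N A e (p₀ + p) q₀ hz).wdz_eq, ← Nat.add_assoc]

lemma entry_formula (N : ℕ) (A : ℕ → ℕ → ℂ) (e : ℕ → ℂ) (f : ℂ → ℂ)
    (hf : ∀ w, f w = Ff N A e 0 0 w) (p q : ℕ) :
    ∀ z ∈ Complex.slitPlane, wdz^[p] (wdzbar^[q] f) z = Ff N A e p q z := by
  intro z hz
  have hfq : ∀ w ∈ Complex.slitPlane, wdzbar^[q] f w = Ff N A e 0 q w := by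
    intro w hw
    rw [funext hf]
    simpa using iter_wdzbar_Ff N A e 0 0 q w hw
  rw [iter_wdz_congr hfq p z hz]
  simpa using iter_wdz_Ff N A e 0 q p z hz

lemma descPochhammer_eval_prod (p : ℕ) (x : ℂ) :
    (descPochhammer ℂ p).eval x = ∏ t ∈ range p, (x - t) := by
  induction p with
  | zero => simp [descPochhammer]
  | succ p ih => rw [descPochhammer_succ_eval, ih, Finset.prod_range_succ]

lemma double_sum_fin (N : ℕ) (g : ℕ → ℕ → ℂ) :
    ∑ j ∈ range N, ∑ k ∈ range N, g j k = ∑ j : Fin N, ∑ k : Fin N, g (j : ℕ) (k : ℕ) := by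
  rw [← Fin.sum_univ_eq_sum_range (fun j => ∑ k ∈ range N, g j k) N]
  exact Finset.sum_congr rfl fun j _ => (Fin.sum_univ_eq_sum_range (g (j : ℕ)) N).symm

lemma det_Ff (n : ℕ) (A κ : ℕ → ℕ → ℂ) (lamC : ℕ → ℂ) (e : ℕ → ℂ) (z : ℂ) (hz0 : z ≠ 0)
    (hA : ∀ j k, A j k = ∑ i ∈ range (n + 1), lamC i * κ i j * (starRingEnd ℂ) (κ i k))
    (hκdiag : ∀ i, κ i i = 1) (hκup : ∀ i j, i < j → κ i j = 0) :
    (Matrix.of fun p q : Fin (n + 1) => Ff (n + 1) A e (p : ℕ) (q : ℕ) z).det =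
      (∏ i ∈ range (n + 1), lamC i) *
        (((∏ p ∈ range (n + 1), (z ^ p)⁻¹) *
            (Matrix.vandermonde (fun i : Fin (n + 1) => e (i : ℕ))).det *
            ∏ j ∈ range (n + 1), z ^ (e j)) *
          (starRingEnd ℂ) ((∏ p ∈ range (n + 1), (z ^ p)⁻¹) *
            (Matrix.vandermonde (fun i : Fin (n + 1) => e (i : ℕ))).det *
            ∏ j ∈ range (n + 1), z ^ (e j))) := by
  classical
  set Bm : Matrix (Fin (n + 1)) (Fin (n + 1)) ℂ :=
    Matrix.of fun p j : Fin (n + 1) =>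
      (∏ t ∈ range (p : ℕ), (e (j : ℕ) - t)) * z ^ (e (j : ℕ) - ((p : ℕ) : ℂ)) with hBm
  set Am : Matrix (Fin (n + 1)) (Fin (n + 1)) ℂ :=
    Matrix.of fun j k : Fin (n + 1) => A (j : ℕ) (k : ℕ) with hAm
  have hM : (Matrix.of fun p q : Fin (n + 1) => Ff (n + 1) A e (p : ℕ) (q : ℕ) z)
      = Bm * Am * Bm.conjTranspose := by
    ext p q
    show Ff (n + 1) A e (p : ℕ) (q : ℕ) z = _
    unfold Ff
    rw [double_sum_fin]
    simp only [Matrix.mul_apply, Matrix.conjTranspose_apply, Matrix.of_apply, hBm, hAm,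
      Finset.sum_mul]
    rw [Finset.sum_comm]
    refine Finset.sum_congr rfl fun k _ => Finset.sum_congr rfl fun j _ => ?_
    simp only [star_def]
    ring
  rw [hM, Matrix.det_mul, Matrix.det_mul, Matrix.det_conjTranspose]
  -- compute det Am
  have hAmdet : Am.det = ∏ i ∈ range (n + 1), lamC i := by
    have hfact : Am = (Matrix.of fun j i : Fin (n + 1) => κ (i : ℕ) (j : ℕ) * lamC (i : ℕ)) *
        (Matrix.of fun i k : Fin (n + 1) => (starRingEnd ℂ) (κ (i : ℕ) (k : ℕ))) := by
      ext j k
      show A (j : ℕ) (k : ℕ) = _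
      rw [hA]
      rw [← Fin.sum_univ_eq_sum_range
        (fun i => lamC i * κ i (j : ℕ) * (starRingEnd ℂ) (κ i (k : ℕ))) (n + 1)]
      simp only [Matrix.mul_apply, Matrix.of_apply]
      exact Finset.sum_congr rfl fun i _ => by ring
    set M1 : Matrix (Fin (n + 1)) (Fin (n + 1)) ℂ :=
      Matrix.of fun j i : Fin (n + 1) => κ (i : ℕ) (j : ℕ) * lamC (i : ℕ) with hM1
    set M2 : Matrix (Fin (n + 1)) (Fin (n + 1)) ℂ :=
      Matrix.of fun i k : Fin (n + 1) => (starRingEnd ℂ) (κ (i : ℕ) (k : ℕ)) with hM2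
    have htri1 : M1.BlockTriangular id := by
      intro i j hij
      have h0 : κ (j : ℕ) (i : ℕ) = 0 := hκup _ _ hij
      show κ (j : ℕ) (i : ℕ) * lamC (j : ℕ) = 0
      rw [h0, zero_mul]
    have htri2 : M2.BlockTriangular OrderDual.toDual := by
      intro i j hij
      have h0 : κ (i : ℕ) (j : ℕ) = 0 := hκup _ _ hij
      show (starRingEnd ℂ) (κ (i : ℕ) (j : ℕ)) = 0
      rw [h0, map_zero]
    rw [hfact, Matrix.det_mul, Matrix.det_of_upperTriangular htri1,
      Matrix.det_of_lowerTriangular M2 htri2]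
    have e1 : ∀ i : Fin (n + 1), M1 i i = lamC (i : ℕ) := fun i => by
      show κ (i : ℕ) (i : ℕ) * lamC (i : ℕ) = _
      rw [hκdiag, one_mul]
    have e2 : ∀ i : Fin (n + 1), M2 i i = 1 := fun i => by
      show (starRingEnd ℂ) (κ (i : ℕ) (i : ℕ)) = 1
      rw [hκdiag, map_one]
    rw [Finset.prod_congr rfl fun i _ => e1 i, Finset.prod_congr rfl fun i _ => e2 i,
      Finset.prod_const_one, mul_one, Fin.prod_univ_eq_prod_range (fun i => lamC i) (n + 1)]
  -- compute det Bm
  have hBmdet : Bm.det = (∏ p ∈ range (n + 1), (z ^ p)⁻¹) *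
      (Matrix.vandermonde (fun i : Fin (n + 1) => e (i : ℕ))).det *
      ∏ j ∈ range (n + 1), z ^ (e j) := by
    have hfact : Bm = Matrix.diagonal (fun p : Fin (n + 1) => (z ^ (p : ℕ))⁻¹) *
        (Matrix.of fun p j : Fin (n + 1) => (descPochhammer ℂ (p : ℕ)).eval (e (j : ℕ))) *
        Matrix.diagonal (fun j : Fin (n + 1) => z ^ (e (j : ℕ))) := by
      ext p j
      rw [Matrix.mul_diagonal, Matrix.diagonal_mul]
      show (∏ t ∈ range (p : ℕ), (e (j : ℕ) - t)) * z ^ (e (j : ℕ) - ((p : ℕ) : ℂ)) = _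
      simp only [Matrix.of_apply]
      rw [descPochhammer_eval_prod, Complex.cpow_sub _ _ hz0, Complex.cpow_natCast]
      field_simp
    rw [hfact, Matrix.det_mul, Matrix.det_mul, Matrix.det_diagonal, Matrix.det_diagonal]
    have hvdm : (Matrix.of fun p j : Fin (n + 1) =>
        (descPochhammer ℂ (p : ℕ)).eval (e (j : ℕ))).det
        = (Matrix.vandermonde (fun i : Fin (n + 1) => e (i : ℕ))).det := by
      rw [← Matrix.det_transpose]
      rw [Matrix.det_eval_matrixOfPolynomials_eq_det_vandermonde
        (fun i : Fin (n + 1) => e (i : ℕ)) (fun i => descPochhammer ℂ (i : ℕ))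
        (fun i => descPochhammer_natDegree ℂ (i : ℕ)) (fun i => monic_descPochhammer ℂ (i : ℕ))]
      congr 1
    rw [hvdm, ← Fin.prod_univ_eq_prod_range (fun p => (z ^ p)⁻¹) (n + 1),
      ← Fin.prod_univ_eq_prod_range (fun j => z ^ (e j)) (n + 1)]
  rw [hAmdet, hBmdet]
  simp only [star_def]
  ring

lemma prod_Icc_one {M : Type*} [CommMonoid M] (n : ℕ) (g : ℕ → M) :
    ∏ i ∈ Icc 1 n, g i = ∏ i ∈ range n, g (i + 1) := by
  induction n with
  | zero => simp
  | succ n ih =>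
    rw [Finset.prod_Icc_succ_top (Nat.succ_le_succ (Nat.zero_le n)), ih, Finset.prod_range_succ]

lemma sum_Icc_one {M : Type*} [AddCommMonoid M] (n : ℕ) (g : ℕ → M) :
    ∑ i ∈ Icc 1 n, g i = ∑ i ∈ range n, g (i + 1) := by
  induction n with
  | zero => simp
  | succ n ih =>
    rw [Finset.sum_Icc_succ_top (Nat.succ_le_succ (Nat.zero_le n)), ih, Finset.sum_range_succ]

lemma swap_sum (n : ℕ) (μ : ℕ → ℝ) :
    ∑ j ∈ range (n + 1), ∑ k ∈ Icc 1 j, μ k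
      = ∑ k ∈ Icc 1 n, ((n + 1 - k : ℕ) : ℝ) * μ k := by
  have h1 : ∀ j ∈ range (n + 1), ∑ k ∈ Icc 1 j, μ k
      = ∑ k ∈ range (n + 1), (if 1 ≤ k ∧ k ≤ j then μ k else 0) := by
    intro j hj
    rw [Finset.mem_range] at hj
    rw [← Finset.sum_filter]
    congr 1
    ext k
    simp only [Finset.mem_Icc, Finset.mem_filter, Finset.mem_range]
    omega
  rw [Finset.sum_congr rfl h1, Finset.sum_comm]
  have h2 : ∀ k ∈ range (n + 1), ∑ j ∈ range (n + 1), (if 1 ≤ k ∧ k ≤ j then μ k else 0)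
      = (if 1 ≤ k then ((n + 1 - k : ℕ) : ℝ) * μ k else 0) := by
    intro k hk
    rw [Finset.mem_range] at hk
    by_cases h : 1 ≤ k
    · rw [if_pos h]
      have : ∀ j, (if 1 ≤ k ∧ k ≤ j then μ k else 0) = if k ≤ j then μ k else 0 := by
        intro j; by_cases hkj : k ≤ j <;> simp [h, hkj]
      rw [Finset.sum_congr rfl fun j _ => this j, ← Finset.sum_filter]
      have hfil : (range (n + 1)).filter (fun j => k ≤ j) = Icc k n := by
        ext j; simp only [Finset.mem_filter, Finset.mem_range, Finset.mem_Icc]; omega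
      rw [hfil, Finset.sum_const, Nat.card_Icc, nsmul_eq_mul]
    · rw [if_neg h]
      refine Finset.sum_eq_zero fun j _ => by simp [h]
  rw [Finset.sum_congr rfl h2, ← Finset.sum_filter]
  congr 1
  ext k
  simp only [Finset.mem_filter, Finset.mem_range, Finset.mem_Icc]
  omega

lemma gauss_nat (n : ℕ) : (∑ p ∈ range (n + 1), 2 * p) = n * (n + 1) := by
  induction n with
  | zero => simp
  | succ n ih => rw [Finset.sum_range_succ, ih]; ring

lemma exponent_identity (n : ℕ) (μ : ℕ → ℝ) :
    ∑ i ∈ Icc 1 n, 2 * ((n : ℝ) + 1 - i) * (μ i - 1)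
      = (∑ j ∈ range (n + 1), 2 * ∑ k ∈ Icc 1 j, μ k)
          - ((∑ p ∈ range (n + 1), 2 * p : ℕ) : ℝ) := by
  have hsplit : ∑ i ∈ Icc 1 n, 2 * ((n : ℝ) + 1 - i) * (μ i - 1)
      = (∑ i ∈ Icc 1 n, 2 * (((n + 1 - i : ℕ) : ℝ) * μ i))
          - ∑ i ∈ Icc 1 n, 2 * ((n + 1 - i : ℕ) : ℝ) := by
    rw [← Finset.sum_sub_distrib]
    refine Finset.sum_congr rfl fun i hi => ?_
    rw [Finset.mem_Icc] at hi
    have : ((n + 1 - i : ℕ) : ℝ) = (n : ℝ) + 1 - i := by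
      push_cast [Nat.cast_sub (by omega : i ≤ n + 1)]; ring
    rw [this]; ring
  rw [hsplit]
  have h1 : ∑ j ∈ range (n + 1), 2 * ∑ k ∈ Icc 1 j, μ k
      = ∑ i ∈ Icc 1 n, 2 * (((n + 1 - i : ℕ) : ℝ) * μ i) := by
    rw [← Finset.mul_sum, swap_sum, Finset.mul_sum]
  have h2 : ∑ i ∈ Icc 1 n, 2 * ((n + 1 - i : ℕ) : ℝ)
      = ((∑ p ∈ range (n + 1), 2 * p : ℕ) : ℝ) := by
    have hnat : (∑ i ∈ Icc 1 n, 2 * (n + 1 - i)) = ∑ p ∈ range (n + 1), 2 * p := by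
      rw [sum_Icc_one]
      have e1 : ∑ i ∈ range n, 2 * (n + 1 - (i + 1)) = ∑ i ∈ range n, 2 * (n - i) :=
        Finset.sum_congr rfl fun i hi => by rw [Finset.mem_range] at hi; congr 1; omega
      have e2 : ∑ j ∈ range n, 2 * (n - 1 - j + 1) = ∑ j ∈ range n, 2 * (j + 1) :=
        Finset.sum_range_reflect (fun j => 2 * (j + 1)) n
      have e3 : ∑ i ∈ range n, 2 * (n - i) = ∑ j ∈ range n, 2 * (n - 1 - j + 1) :=
        Finset.sum_congr rfl fun j hj => by rw [Finset.mem_range] at hj; congr 1; omega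
      rw [e1, e3, e2, Finset.sum_range_succ' (fun p => 2 * p) n, mul_zero, add_zero]
    rw [← hnat]
    push_cast
    ring
  rw [h1, h2]

lemma Icc_one_eq_Ioc (a b : ℕ) : Icc (a + 1) b = Ioc a b := by
  ext x; simp only [Finset.mem_Icc, Finset.mem_Ioc]; omega

lemma vr_eq (n : ℕ) (μ : ℕ → ℝ) :
    ∏ i ∈ range (n + 1), ∏ j ∈ Ioc i n,
        ((∑ k ∈ Icc 1 j, μ k) - ∑ k ∈ Icc 1 i, μ k)
      = ∏ i ∈ Icc 1 n, ∏ j ∈ Icc i n, (∑ k ∈ Icc i j, μ k) := by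
  rw [Finset.prod_range_succ, Finset.Ioc_self, Finset.prod_empty, mul_one,
    prod_Icc_one n (fun i => ∏ j ∈ Icc i n, (∑ k ∈ Icc i j, μ k))]
  refine Finset.prod_congr rfl fun i hi => ?_
  rw [Finset.mem_range] at hi
  rw [Icc_one_eq_Ioc i n]
  refine Finset.prod_congr rfl fun j hj => ?_
  rw [Finset.mem_Ioc] at hj
  rw [Icc_one_eq_Ioc i j]
  have h0i : (∑ k ∈ Icc 1 i, μ k) = ∑ k ∈ Ioc 0 i, μ k := by
    rw [show Icc 1 i = Ioc 0 i from Icc_one_eq_Ioc 0 i]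
  have h0j : (∑ k ∈ Icc 1 j, μ k) = ∑ k ∈ Ioc 0 j, μ k := by
    rw [show Icc 1 j = Ioc 0 j from Icc_one_eq_Ioc 0 j]
  rw [h0i, h0j]
  have := Finset.sum_Ioc_consecutive μ (Nat.zero_le i) hj.1.le
  linarith

lemma real_side (n : ℕ) (μ : ℕ → ℝ) (lam : ℕ → ℝ) (r : ℝ) (hr : 0 < r) :
    (∏ i ∈ range (n + 1), lam i) *
      (((∏ i ∈ range (n + 1), ∏ j ∈ Ioc i n,
          ((∑ k ∈ Icc 1 j, μ k) - ∑ k ∈ Icc 1 i, μ k)) ^ 2) *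
        ((∏ j ∈ range (n + 1), r ^ (2 * ∑ k ∈ Icc 1 j, μ k)) *
          ∏ p ∈ range (n + 1), (r ^ (2 * p))⁻¹))
    = ((∏ i ∈ range (n + 1), lam i) *
        ∏ i ∈ Icc 1 n, ∏ j ∈ Icc i n, (∑ k ∈ Icc i j, μ k) ^ 2) *
        r ^ (∑ i ∈ Icc 1 n, 2 * ((n : ℝ) + 1 - i) * (μ i - 1)) := by
  have hsq : (∏ i ∈ Icc 1 n, ∏ j ∈ Icc i n, (∑ k ∈ Icc i j, μ k) ^ 2)
      = (∏ i ∈ range (n + 1), ∏ j ∈ Ioc i n,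
          ((∑ k ∈ Icc 1 j, μ k) - ∑ k ∈ Icc 1 i, μ k)) ^ 2 := by
    rw [vr_eq]
    rw [← Finset.prod_pow]
    exact Finset.prod_congr rfl fun i _ => Finset.prod_pow _ 2 _
  have hA : (∏ j ∈ range (n + 1), r ^ (2 * ∑ k ∈ Icc 1 j, μ k))
      = r ^ (∑ j ∈ range (n + 1), 2 * ∑ k ∈ Icc 1 j, μ k) :=
    (Real.rpow_sum_of_pos hr _ _).symm
  have hB : (∏ p ∈ range (n + 1), (r ^ (2 * p))⁻¹)
      = (r ^ ((∑ p ∈ range (n + 1), 2 * p : ℕ) : ℝ))⁻¹ := by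
    rw [Finset.prod_inv_distrib, Finset.prod_pow_eq_pow_sum, Real.rpow_natCast]
  have hrE : r ^ (∑ i ∈ Icc 1 n, 2 * ((n : ℝ) + 1 - i) * (μ i - 1))
      = r ^ (∑ j ∈ range (n + 1), 2 * ∑ k ∈ Icc 1 j, μ k) *
          (r ^ ((∑ p ∈ range (n + 1), 2 * p : ℕ) : ℝ))⁻¹ := by
    rw [exponent_identity, Real.rpow_sub hr]
    rw [div_eq_mul_inv]
  rw [hsq, hA, hB, hrE]
  ring

lemma Ff_zero_eq (N : ℕ) (lamC : ℕ → ℂ) (κ : ℕ → ℕ → ℂ) (e : ℕ → ℂ) (w : ℂ) :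
    Ff N (fun j k => ∑ i ∈ range N, lamC i * κ i j * (starRingEnd ℂ) (κ i k)) e 0 0 w
      = ∑ i ∈ range N, lamC i *
          ((∑ j ∈ range N, κ i j * w ^ (e j)) *
            (starRingEnd ℂ) (∑ j ∈ range N, κ i j * w ^ (e j))) := by
  unfold Ff
  simp only [Finset.prod_range_zero, one_mul, Nat.cast_zero, sub_zero]
  have hR : ∀ i, (∑ j ∈ range N, κ i j * w ^ (e j)) *
      (starRingEnd ℂ) (∑ j ∈ range N, κ i j * w ^ (e j))
      = ∑ j ∈ range N, ∑ k ∈ range N, (κ i j * w ^ e j) *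
          (starRingEnd ℂ) (κ i k * w ^ e k) := by
    intro i
    rw [map_sum, Finset.sum_mul_sum]
  simp only [hR, Finset.mul_sum, Finset.sum_mul]
  rw [Finset.sum_congr rfl fun j (_ : j ∈ range N) =>
    Finset.sum_comm (s := range N) (t := range N)
      (f := fun k i => lamC i * κ i j * (starRingEnd ℂ) (κ i k) * w ^ e j
        * (starRingEnd ℂ) (w ^ e k))]
  rw [Finset.sum_comm]
  refine Finset.sum_congr rfl fun i _ => Finset.sum_congr rfl fun j _ =>
    Finset.sum_congr rfl fun k _ => ?_
  rw [map_mul]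
  ring

lemma vand_eval (n : ℕ) (mR : ℕ → ℝ) :
    (Matrix.vandermonde (fun i : Fin (n + 1) => ((mR (i : ℕ) : ℝ) : ℂ))).det
      = ((∏ i ∈ range (n + 1), ∏ j ∈ Ioc i n, (mR j - mR i) : ℝ) : ℂ) := by
  rw [Matrix.det_vandermonde, Complex.ofReal_prod,
    ← Fin.prod_univ_eq_prod_range (fun i => ((∏ j ∈ Ioc i n, (mR j - mR i) : ℝ) : ℂ)) (n + 1)]
  refine Finset.prod_congr rfl fun i _ => ?_
  rw [Complex.ofReal_prod]
  have hmap : (Ioc (i : ℕ) n) = (Ioi i).map Fin.valEmbedding := by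
    rw [Fin.map_valEmbedding_Ioi]
    ext x; simp only [Finset.mem_Ioc, Finset.mem_Ioo]; omega
  rw [hmap, Finset.prod_map]
  refine Finset.prod_congr rfl fun j _ => ?_
  push_cast
  rfl

lemma pair_real (n : ℕ) (mR : ℕ → ℝ) (Vr : ℝ) (lam : ℕ → ℝ) (z : ℂ) (hz0 : z ≠ 0) :
    (∏ i ∈ range (n + 1), ((lam i : ℝ) : ℂ)) *
      (((∏ p ∈ range (n + 1), (z ^ p)⁻¹) * ((Vr : ℝ) : ℂ) *
          ∏ j ∈ range (n + 1), z ^ ((mR j : ℝ) : ℂ)) *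
        (starRingEnd ℂ) ((∏ p ∈ range (n + 1), (z ^ p)⁻¹) * ((Vr : ℝ) : ℂ) *
          ∏ j ∈ range (n + 1), z ^ ((mR j : ℝ) : ℂ)))
    = (((∏ i ∈ range (n + 1), lam i) *
        (Vr ^ 2 * ((∏ j ∈ range (n + 1), ‖z‖ ^ (2 * mR j)) *
          ∏ p ∈ range (n + 1), (‖z‖ ^ (2 * p))⁻¹)) : ℝ) : ℂ) := by
  have habs : (0 : ℝ) < ‖z‖ := norm_pos_iff.mpr hz0
  have hpe : ∀ t : ℝ, (z ^ ((t : ℝ) : ℂ)) * (starRingEnd ℂ) (z ^ ((t : ℝ) : ℂ))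
      = ((‖z‖ ^ (2 * t) : ℝ) : ℂ) := by
    intro t
    have habscpow : ‖z ^ ((t : ℝ) : ℂ)‖ = ‖z‖ ^ t := by
      rw [Complex.norm_cpow_of_ne_zero hz0]
      simp
    rw [Complex.mul_conj, Complex.normSq_eq_norm_sq, habscpow]
    congr 1
    rw [show (2 : ℝ) * t = t * 2 from mul_comm 2 t, Real.rpow_mul habs.le, Real.rpow_two]
  have hpp : ∀ p : ℕ, ((z ^ p)⁻¹) * (starRingEnd ℂ) ((z ^ p)⁻¹)
      = (((‖z‖ ^ (2 * p))⁻¹ : ℝ) : ℂ) := by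
    intro p
    rw [map_inv₀, ← mul_inv, Complex.mul_conj, Complex.normSq_eq_norm_sq, norm_pow, ← pow_mul]
    rw [mul_comm p 2]
    push_cast
    ring
  rw [map_mul, map_mul, map_prod, map_prod, Complex.conj_ofReal]
  have hgroup : (∏ i ∈ range (n + 1), ((lam i : ℝ) : ℂ)) *
      (((∏ p ∈ range (n + 1), (z ^ p)⁻¹) * ((Vr : ℝ) : ℂ) *
          ∏ j ∈ range (n + 1), z ^ ((mR j : ℝ) : ℂ)) *
        ((∏ p ∈ range (n + 1), (starRingEnd ℂ) ((z ^ p)⁻¹)) * ((Vr : ℝ) : ℂ) *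
          ∏ j ∈ range (n + 1), (starRingEnd ℂ) (z ^ ((mR j : ℝ) : ℂ))))
      = (∏ i ∈ range (n + 1), ((lam i : ℝ) : ℂ)) *
        ((((Vr : ℝ) : ℂ) * ((Vr : ℝ) : ℂ)) *
          ((∏ p ∈ range (n + 1), ((z ^ p)⁻¹ * (starRingEnd ℂ) ((z ^ p)⁻¹))) *
            (∏ j ∈ range (n + 1), (z ^ ((mR j : ℝ) : ℂ) *
              (starRingEnd ℂ) (z ^ ((mR j : ℝ) : ℂ)))))) := by
    rw [Finset.prod_mul_distrib, Finset.prod_mul_distrib]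
    ring
  rw [hgroup]
  simp only [hpe, hpp]
  rw [← Complex.ofReal_prod, ← Complex.ofReal_prod, ← Complex.ofReal_prod]
  push_cast
  ring

lemma vand_eval' (n : ℕ) (μ : ℕ → ℝ) :
    (Matrix.vandermonde (fun i : Fin (n + 1) =>
        (((∑ k ∈ Finset.Icc 1 (i : ℕ), μ k) : ℝ) : ℂ))).det
      = ((∏ i ∈ range (n + 1), ∏ j ∈ Ioc i n,
          ((∑ k ∈ Finset.Icc 1 j, μ k) - ∑ k ∈ Finset.Icc 1 i, μ k) : ℝ) : ℂ) :=
  vand_eval n (fun j => ∑ k ∈ Finset.Icc 1 j, μ k)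

lemma pair_real' (n : ℕ) (μ : ℕ → ℝ) (Vr : ℝ) (lam : ℕ → ℝ) (z : ℂ) (hz0 : z ≠ 0) :
    (∏ i ∈ range (n + 1), ((lam i : ℝ) : ℂ)) *
      (((∏ p ∈ range (n + 1), (z ^ p)⁻¹) * ((Vr : ℝ) : ℂ) *
          ∏ j ∈ range (n + 1), z ^ (((∑ k ∈ Finset.Icc 1 j, μ k : ℝ)) : ℂ)) *
        (starRingEnd ℂ) ((∏ p ∈ range (n + 1), (z ^ p)⁻¹) * ((Vr : ℝ) : ℂ) *
          ∏ j ∈ range (n + 1), z ^ (((∑ k ∈ Finset.Icc 1 j, μ k : ℝ)) : ℂ)))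
    = (((∏ i ∈ range (n + 1), lam i) *
        (Vr ^ 2 * ((∏ j ∈ range (n + 1), ‖z‖ ^ (2 * ∑ k ∈ Finset.Icc 1 j, μ k)) *
          ∏ p ∈ range (n + 1), (‖z‖ ^ (2 * p))⁻¹)) : ℝ) : ℂ) :=
  pair_real n (fun j => ∑ k ∈ Finset.Icc 1 j, μ k) Vr lam z hz0

/-- On the slit plane, with
`f̃(z) = λ_0 + Σ_{i=1}^n λ_i |P_i(z)|²` and
`P_i(z) = z^{μ_1+⋯+μ_i} + Σ_{j=1}^{i−1} c_{ij} z^{μ_1+⋯+μ_j} + c_{i0}` (principal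
branch powers, `μ_i > 0`, `γ_i = μ_i − 1`), one has
`det_{n+1}(f̃) = λ_0⋯λ_n ∏_{1≤i≤j≤n}(μ_i+⋯+μ_j)² |z|^{2nγ_1+2(n−1)γ_2+⋯+2γ_n}`. -/
theorem detk_explicit_formula (n : ℕ) (hn : 1 ≤ n)
    (μ : ℕ → ℝ) (hμ : ∀ i ∈ Finset.Icc 1 n, 0 < μ i)
    (lam : ℕ → ℝ) (c : ℕ → ℕ → ℂ)
    (P : ℕ → ℂ → ℂ)
    (hP : ∀ i, P i = fun z =>
      z ^ (((∑ k ∈ Finset.Icc 1 i, μ k) : ℝ) : ℂ)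
        + ∑ j ∈ Finset.Icc 1 (i - 1), c i j * z ^ (((∑ k ∈ Finset.Icc 1 j, μ k) : ℝ) : ℂ)
        + c i 0)
    (f : ℂ → ℂ)
    (hf : f = fun z =>
      ((lam 0 : ℝ) : ℂ) + ∑ i ∈ Finset.Icc 1 n, ((lam i * (‖P i z‖) ^ 2 : ℝ) : ℂ)) :
    ∀ z ∈ Complex.slitPlane,
      detk (n + 1) f z =
        ((((∏ i ∈ Finset.range (n + 1), lam i) *
            ∏ i ∈ Finset.Icc 1 n, ∏ j ∈ Finset.Icc i n, (∑ k ∈ Finset.Icc i j, μ k) ^ 2) *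
            (‖z‖) ^ (∑ i ∈ Finset.Icc 1 n, 2 * ((n : ℝ) + 1 - i) * (μ i - 1)) : ℝ) : ℂ) := by
  intro z hz
  have hz0 : z ≠ 0 := Complex.slitPlane_ne_zero hz
  have habs : (0 : ℝ) < ‖z‖ := norm_pos_iff.mpr hz0
  set e : ℕ → ℂ := fun j => (((∑ k ∈ Finset.Icc 1 j, μ k : ℝ)) : ℂ) with he
  set κ : ℕ → ℕ → ℂ := fun i j =>
    if j = i then 1 else if j < i then (if j = 0 then c i 0 else c i j) else 0 with hκ
  set lamC : ℕ → ℂ := fun i => ((lam i : ℝ) : ℂ) with hlamC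
  set A : ℕ → ℕ → ℂ := fun j k =>
    ∑ i ∈ range (n + 1), lamC i * κ i j * (starRingEnd ℂ) (κ i k) with hAdef
  have hκdiag : ∀ i, κ i i = 1 := fun i => by simp [hκ]
  have hκup : ∀ i j, i < j → κ i j = 0 := fun i j h => by
    simp only [hκ]
    rw [if_neg (by omega), if_neg (by omega)]
  have hsum_split : ∀ g : ℕ → ℂ, ∑ i ∈ range (n + 1), g i = g 0 + ∑ i ∈ Finset.Icc 1 n, g i := by
    intro g
    rw [Finset.range_eq_Ico, Finset.sum_eq_sum_Ico_succ_bot (Nat.succ_pos n) g,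
      Nat.succ_eq_add_one, Finset.Ico_add_one_right_eq_Icc]
  have he0 : e 0 = 0 := by
    simp only [he]
    rw [show (Finset.Icc 1 0 : Finset ℕ) = ∅ from Finset.Icc_eq_empty (by omega),
      Finset.sum_empty]
    simp
  have hQ0 : ∀ w : ℂ, (∑ j ∈ range (n + 1), κ 0 j * w ^ (e j)) = 1 := by
    intro w
    rw [hsum_split (fun j => κ 0 j * w ^ (e j))]
    have h2 : ∑ i ∈ Finset.Icc 1 n, κ 0 i * w ^ (e i) = 0 :=
      Finset.sum_eq_zero fun i hi => by
        rw [Finset.mem_Icc] at hi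
        rw [hκup 0 i (by omega), zero_mul]
    rw [h2, add_zero, hκdiag 0, he0, Complex.cpow_zero, mul_one]
  have hQP : ∀ i, 1 ≤ i → i ≤ n → ∀ w : ℂ,
      (∑ j ∈ range (n + 1), κ i j * w ^ (e j)) = P i w := by
    intro i h1 h2 w
    obtain ⟨i', rfl⟩ : ∃ i', i = i' + 1 := ⟨i - 1, by omega⟩
    simp only [hP]
    rw [hsum_split (fun j => κ (i' + 1) j * w ^ (e j))]
    rw [show (Finset.Icc 1 n : Finset ℕ) = Finset.Ioc 0 n from Icc_one_eq_Ioc 0 n]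
    rw [← Finset.sum_Ioc_consecutive (fun j => κ (i' + 1) j * w ^ (e j))
      (Nat.zero_le (i' + 1)) (by omega : i' + 1 ≤ n)]
    have htail : ∑ j ∈ Finset.Ioc (i' + 1) n, κ (i' + 1) j * w ^ (e j) = 0 :=
      Finset.sum_eq_zero fun j hj => by
        rw [Finset.mem_Ioc] at hj
        rw [hκup _ _ hj.1, zero_mul]
    rw [htail, add_zero]
    rw [show (Finset.Ioc 0 (i' + 1) : Finset ℕ) = Finset.Icc 1 (i' + 1) from
      (Icc_one_eq_Ioc 0 (i' + 1)).symm]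
    rw [Finset.sum_Icc_succ_top (by omega : 1 ≤ i' + 1) (fun j => κ (i' + 1) j * w ^ (e j))]
    have hmid : ∑ j ∈ Finset.Icc 1 i', κ (i' + 1) j * w ^ (e j)
        = ∑ j ∈ Finset.Icc 1 i', c (i' + 1) j * w ^ (e j) :=
      Finset.sum_congr rfl fun j hj => by
        rw [Finset.mem_Icc] at hj
        have hcj : κ (i' + 1) j = c (i' + 1) j := by
          simp only [hκ]
          rw [if_neg (by omega), if_pos (by omega), if_neg (by omega)]
        rw [hcj]
    have hk0 : κ (i' + 1) 0 = c (i' + 1) 0 := by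
      simp only [hκ]
      rw [if_neg (by omega), if_pos (by omega)]
      simp
    rw [hmid, hκdiag, hk0, he0, Complex.cpow_zero, mul_one, one_mul]
    simp only [he, Nat.add_sub_cancel]
    ring
  have hfF : ∀ w, f w = Ff (n + 1) A e 0 0 w := by
    intro w
    simp only [hf]
    rw [hAdef, Ff_zero_eq (n + 1) lamC κ e w]
    rw [hsum_split (fun i => lamC i *
      ((∑ j ∈ range (n + 1), κ i j * w ^ (e j)) *
        (starRingEnd ℂ) (∑ j ∈ range (n + 1), κ i j * w ^ (e j))))]
    rw [hQ0 w]
    have hterm : ∀ i ∈ Finset.Icc 1 n, lamC i *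
        ((∑ j ∈ range (n + 1), κ i j * w ^ (e j)) *
          (starRingEnd ℂ) (∑ j ∈ range (n + 1), κ i j * w ^ (e j)))
        = ((lam i * (‖P i w‖) ^ 2 : ℝ) : ℂ) := by
      intro i hi
      rw [Finset.mem_Icc] at hi
      rw [hQP i hi.1 hi.2 w, Complex.mul_conj, Complex.normSq_eq_norm_sq, hlamC]
      push_cast
      ring
    rw [Finset.sum_congr rfl hterm]
    simp [hlamC]
  have hdet : detk (n + 1) f z
      = (Matrix.of fun p q : Fin (n + 1) => Ff (n + 1) A e (p : ℕ) (q : ℕ) z).det := by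
    unfold detk
    congr 1
    ext p q
    simp only [Matrix.of_apply]
    exact entry_formula (n + 1) A e f hfF (p : ℕ) (q : ℕ) z hz
  rw [hdet, det_Ff n A κ lamC e z hz0 (fun j k => by rw [hAdef]) hκdiag hκup]
  simp only [he, hlamC]
  rw [vand_eval' n μ, pair_real' n μ _ lam z hz0]
  exact congrArg Complex.ofReal (real_side n μ lam ‖z‖ habs)
end
end
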